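/- Every proper sub-disjunction of a clause carries strictly more information: let φ = L₁ ∨ ⋯ ∨ L_k be a clause, i.e. a disjunction of k ≥ 2 literals whose underlying atoms are pairwise distinct, and let S be a nonempty proper subset of {1, …, k}. Then I(⋁_{i∈S} L_i) > I(φ); hence every cut of φ into a proper sub-disjunction is bad. -/
import Mathlib


/-- Propositional formulas over atoms `V`: `var v | ¬φ | φ ∧ φ | φ ∨ φ`. -/
inductive PropForm (V : Type*) where
  | var : V → PropForm V
  | not : PropForm V → PropForm V
  | and : PropForm V → PropForm V → PropForm V
  | or  : PropForm V → PropForm V → PropForm V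

namespace PropForm

variable {V : Type*}

/-- Boolean semantics: `w ⊨ φ`. -/
def eval (w : V → Bool) : PropForm V → Bool
  | var v => w v
  | not φ => !(eval w φ)
  | and φ ψ => eval w φ && eval w ψ
  | or φ ψ => eval w φ || eval w ψ

end PropForm

variable {V : Type*}

/-- `Content φ` : the finite set of worlds (valuations `V → Bool`) satisfying `φ`. -/
def Content [Fintype V] [DecidableEq V] (φ : PropForm V) : Finset (V → Bool) :=
  Finset.univ.filter fun w => φ.eval w = true

/-- Information content `I(φ) = -log₂(|Content φ| / 2 ^ n)` in the extended reals,
with `I(φ) = +∞` when `Content φ = ∅`. -/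
noncomputable def infoContent [Fintype V] [DecidableEq V] (φ : PropForm V) : EReal :=
  if (Content φ).card = 0 then ⊤
  else (((- Real.logb 2 (((Content φ).card : ℝ) / 2 ^ Fintype.card V)) : ℝ) : EReal)

/-- The disjunction `D 0 ∨ D 1 ∨ ⋯ ∨ D (k-1)` (left-associated), for `k ≥ 1`. -/
def bigOr {k : ℕ} (hk : 0 < k) (D : Fin k → PropForm V) : PropForm V :=
  ((List.ofFn D).tail).foldl PropForm.or (D ⟨0, hk⟩)

/-- The conjunction `C 0 ∧ C 1 ∧ ⋯ ∧ C (m-1)` (left-associated), for `m ≥ 1`. -/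
def bigAnd {m : ℕ} (hm : 0 < m) (C : Fin m → PropForm V) : PropForm V :=
  ((List.ofFn C).tail).foldl PropForm.and (C ⟨0, hm⟩)

/-- The disjunction `⋁_{i ∈ S} D i` over a nonempty finite index set `S`. -/
noncomputable def finsetOr {k : ℕ} (D : Fin k → PropForm V) (S : Finset (Fin k)) (hS : S.Nonempty) :
    PropForm V :=
  (((S.erase (S.min' hS)).toList).map D).foldl PropForm.or (D (S.min' hS))

/-- A literal: a positive or negated atom. -/
inductive Literal (V : Type*) where
  | pos : V → Literal V
  | neg : V → Literal V

/-- The underlying atom of a literal. -/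
def Literal.atom : Literal V → V
  | .pos v => v
  | .neg v => v

/-- The formula corresponding to a literal. -/
def Literal.toForm : Literal V → PropForm V
  | .pos v => .var v
  | .neg v => .not (.var v)

/-- `φ` is a literal formula: `var v` or `¬(var v)`. -/
inductive IsLiteral : PropForm V → Prop
  | var (v : V) : IsLiteral (.var v)
  | negVar (v : V) : IsLiteral (.not (.var v))

/-- `φ` is a clause: a finite disjunction of literals. -/
inductive IsClause : PropForm V → Prop
  | lit {φ : PropForm V} : IsLiteral φ → IsClause φ
  | or {φ ψ : PropForm V} : IsClause φ → IsClause ψ → IsClause (φ.or ψ)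

/-- Immediate (direct) subformula relation. -/
inductive DirectSubform : PropForm V → PropForm V → Prop
  | notArg (φ : PropForm V) : DirectSubform φ (.not φ)
  | andLeft (φ ψ : PropForm V) : DirectSubform φ (.and φ ψ)
  | andRight (φ ψ : PropForm V) : DirectSubform ψ (.and φ ψ)
  | orLeft (φ ψ : PropForm V) : DirectSubform φ (.or φ ψ)
  | orRight (φ ψ : PropForm V) : DirectSubform ψ (.or φ ψ)

/-- `ψ` is a strict subformula of `φ`. -/
def StrictSubform (ψ φ : PropForm V) : Prop := Relation.TransGen DirectSubform ψ φ

/-- `φ` is atomic: it admits no safe cut, i.e. every strict subformula `ψ`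
satisfies `I(ψ) ≥ I(φ)`. -/
def Atomic [Fintype V] [DecidableEq V] (φ : PropForm V) : Prop :=
  ∀ ψ : PropForm V, StrictSubform ψ φ → infoContent φ ≤ infoContent ψ

/-- Value of the atom that makes the literal true. -/
def Literal.satVal : Literal V → Bool
  | .pos _ => true
  | .neg _ => false

lemma Literal.eval_toForm (l : Literal V) (w : V → Bool) :
    l.toForm.eval w = true ↔ w l.atom = l.satVal := by
  cases l with
  | pos v => simp [Literal.toForm, Literal.atom, Literal.satVal, PropForm.eval]
  | neg v => simp [Literal.toForm, Literal.atom, Literal.satVal, PropForm.eval]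

lemma eval_foldl_or (w : V → Bool) :
    ∀ (l : List (PropForm V)) (a : PropForm V),
      (l.foldl PropForm.or a).eval w = (a.eval w || l.any fun ψ => ψ.eval w)
  | [], a => by simp
  | φ :: l, a => by
    simp [List.foldl_cons, eval_foldl_or w l, PropForm.eval, Bool.or_assoc]

lemma eval_bigOr {k : ℕ} (hk : 0 < k) (D : Fin k → PropForm V) (w : V → Bool) :
    (bigOr hk D).eval w = true ↔ ∃ i, (D i).eval w = true := by
  obtain ⟨k', rfl⟩ : ∃ k', k = k' + 1 := ⟨k - 1, by omega⟩
  unfold bigOr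
  rw [List.ofFn_succ]
  simp only [List.tail_cons]
  rw [eval_foldl_or]
  simp only [Bool.or_eq_true, List.any_eq_true, List.mem_ofFn]
  constructor
  · rintro (h | ⟨ψ, ⟨i, rfl⟩, h⟩)
    · exact ⟨_, h⟩
    · exact ⟨_, h⟩
  · rintro ⟨i, h⟩
    rcases Fin.eq_zero_or_eq_succ i with rfl | ⟨j, rfl⟩
    · exact Or.inl h
    · exact Or.inr ⟨_, ⟨j, rfl⟩, h⟩

lemma eval_finsetOr {k : ℕ} (D : Fin k → PropForm V) (S : Finset (Fin k))
    (hS : S.Nonempty) (w : V → Bool) :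
    (finsetOr D S hS).eval w = true ↔ ∃ i ∈ S, (D i).eval w = true := by
  unfold finsetOr
  rw [eval_foldl_or]
  simp only [Bool.or_eq_true, List.any_eq_true, List.mem_map, Finset.mem_toList,
    Finset.mem_erase]
  constructor
  · rintro (h | ⟨ψ, ⟨i, ⟨hne, hi⟩, rfl⟩, h⟩)
    · exact ⟨_, S.min'_mem hS, h⟩
    · exact ⟨i, hi, h⟩
  · rintro ⟨i, hi, h⟩
    by_cases hmin : i = S.min' hS
    · exact Or.inl (hmin ▸ h)
    · exact Or.inr ⟨D i, ⟨i, ⟨hmin, hi⟩, rfl⟩, h⟩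

lemma infoContent_lt_of_card_lt [Fintype V] [DecidableEq V] {φ ψ : PropForm V}
    (h0 : (Content ψ).card ≠ 0) (h : (Content ψ).card < (Content φ).card) :
    infoContent φ < infoContent ψ := by
  have h0' : (Content φ).card ≠ 0 := by omega
  unfold infoContent
  rw [if_neg h0', if_neg h0, EReal.coe_lt_coe_iff]
  have h2 : (0 : ℝ) < 2 ^ Fintype.card V := by positivity
  apply neg_lt_neg
  apply Real.logb_lt_logb one_lt_two
  · exact div_pos (by exact_mod_cast Nat.pos_of_ne_zero h0) h2
  · exact (div_lt_div_iff_of_pos_right h2).mpr (by exact_mod_cast h)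

/-- Every proper sub-disjunction of a clause carries strictly more
information: if `φ = L 0 ∨ ⋯ ∨ L (k-1)` is a clause of `k ≥ 2` literals with pairwise
distinct atoms and `S` is a nonempty proper subset of indices, then
`I(⋁_{i ∈ S} L i) > I(φ)`: every cut of `φ` into a proper sub-disjunction is bad. -/
theorem clause_subdisj_bad_cut {V : Type*} [Fintype V] [DecidableEq V] {k : ℕ}
    (hk : 2 ≤ k) (L : Fin k → Literal V)
    (hdist : Function.Injective fun i => (L i).atom)
    (S : Finset (Fin k)) (hS : S.Nonempty) (hS' : S ≠ Finset.univ) :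
    infoContent (bigOr (by omega : 0 < k) fun i => (L i).toForm) <
      infoContent (finsetOr (fun i => (L i).toForm) S hS) := by
  classical
  set D : Fin k → PropForm V := fun i => (L i).toForm with hD
  -- a world witnessing nonemptiness of the sub-disjunction's content
  set i0 : Fin k := S.min' hS with hi0
  set w0 : V → Bool := fun v => if v = (L i0).atom then (L i0).satVal else true with hw0
  have hw0mem : w0 ∈ Content (finsetOr D S hS) := by
    simp only [Content, Finset.mem_filter, Finset.mem_univ, true_and]
    rw [eval_finsetOr]
    refine ⟨i0, S.min'_mem hS, ?_⟩
    rw [Literal.eval_toForm, hw0]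
    simp
  have h0 : (Content (finsetOr D S hS)).card ≠ 0 := by
    rw [Finset.card_ne_zero]
    exact ⟨w0, hw0mem⟩
  -- a world in the big disjunction's content but not the sub-disjunction's
  obtain ⟨j, hj⟩ : ∃ j, j ∉ S := by
    by_contra h
    push_neg at h
    exact hS' (Finset.eq_univ_iff_forall.mpr h)
  set w1 : V → Bool := fun v =>
    if h : ∃ i, i ∈ S ∧ (L i).atom = v then !(L h.choose).satVal
    else (if v = (L j).atom then (L j).satVal else true) with hw1
  have hw1j : w1 (L j).atom = (L j).satVal := by
    rw [hw1]
    have hne : ¬ ∃ i, i ∈ S ∧ (L i).atom = (L j).atom := by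
      rintro ⟨i, hi, heq⟩
      have : i = j := hdist heq
      exact hj (this ▸ hi)
    simp [dif_neg hne]
  have hw1i : ∀ i ∈ S, w1 (L i).atom = !(L i).satVal := by
    intro i hi
    have hex : ∃ i', i' ∈ S ∧ (L i').atom = (L i).atom := ⟨i, hi, rfl⟩
    have hch := hex.choose_spec
    have : hex.choose = i := hdist hch.2
    simp only [hw1]
    rw [dif_pos hex, this]
  have hw1mem : w1 ∈ Content (bigOr (by omega : 0 < k) D) := by
    simp only [Content, Finset.mem_filter, Finset.mem_univ, true_and]
    rw [eval_bigOr]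
    exact ⟨j, (Literal.eval_toForm _ _).mpr hw1j⟩
  have hw1nmem : w1 ∉ Content (finsetOr D S hS) := by
    simp only [Content, Finset.mem_filter, Finset.mem_univ, true_and]
    rw [eval_finsetOr]
    rintro ⟨i, hi, hev⟩
    have := (Literal.eval_toForm _ _).mp hev
    rw [hw1i i hi] at this
    cases (L i).satVal <;> simp_all
  have hsub : Content (finsetOr D S hS) ⊂ Content (bigOr (by omega : 0 < k) D) := by
    constructor
    · intro w hw
      simp only [Content, Finset.mem_filter, Finset.mem_univ, true_and] at hw ⊢
      rw [eval_finsetOr] at hw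
      rw [eval_bigOr]
      obtain ⟨i, _, h⟩ := hw
      exact ⟨i, h⟩
    · intro h
      exact hw1nmem (h hw1mem)
  exact infoContent_lt_of_card_lt h0 (Finset.card_lt_card hsub)
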